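/- For every integer s ≥ 1, the (2s−1)-set chromatic number of the cycle C_{4s−1} equals 4s−1; that is, the minimum n for which one can assign to each vertex of the cycle on 4s−1 vertices a (2s−1)-element subset of {1,…,n} so that adjacent vertices receive disjoint subsets is exactly 4s−1. -/

import Mathlib

open Finset
open Fin.NatCast Fin.CommRing

lemma key_mem (m : ℕ) (hm : 1 ≤ m) :
    ∃ f : Fin (2*m+1) → Finset (Fin (2*m+1)),
      (∀ v, (f v).card = m) ∧
      ∀ v w, (SimpleGraph.cycleGraph (2*m+1)).Adj v w → Disjoint (f v) (f w) := by
  have hmN : m < 2*m+1 := by omega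
  have hval : ((m : Fin (2*m+1))).val = m := Fin.val_cast_of_lt hmN
  have hone : ((1 : Fin (2*m+1))).val = 1 := by
    rw [Fin.val_one', Nat.mod_eq_of_lt (by omega)]
  refine ⟨fun v => univ.filter (fun c => (c - (m : Fin (2*m+1)) * v).val < m), ?_, ?_⟩
  · intro v
    have h : (univ.filter (fun c : Fin (2*m+1) => (c - (m : Fin (2*m+1)) * v).val < m)).card
        = (Finset.Iio (m : Fin (2*m+1))).card := by
      apply Finset.card_bij' (fun c _ => c - (m : Fin (2*m+1)) * v)
        (fun d _ => d + (m : Fin (2*m+1)) * v)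
      · intro c hc
        simp only [mem_filter, mem_univ, true_and] at hc
        simp [Finset.mem_Iio, Fin.lt_def, hval, hc]
      · intro d hd
        simp only [Finset.mem_Iio, Fin.lt_def, hval] at hd
        simp [hd]
      · intro c _; ring
      · intro d _; ring
    rw [h, Fin.card_Iio, hval]
  · have key : ∀ v w : Fin (2*m+1), w - v = 1 →
        Disjoint (univ.filter (fun c : Fin (2*m+1) => (c - (m : Fin (2*m+1)) * v).val < m))
          (univ.filter (fun c : Fin (2*m+1) => (c - (m : Fin (2*m+1)) * w).val < m)) := by
      intro v w h1
      have hw : w = v + 1 := by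
        have := eq_add_of_sub_eq h1
        rw [this]; ring
      subst hw
      rw [Finset.disjoint_left]
      intro c hc1 hc2
      simp only [mem_filter, mem_univ, true_and] at hc1 hc2
      set d := c - (m : Fin (2*m+1)) * v with hd
      have he : c - (m : Fin (2*m+1)) * (v + 1) = d - m := by rw [hd]; ring
      rw [he] at hc2
      have hsub : (d - (m : Fin (2*m+1))).val = (2*m+1 - m + d.val) % (2*m+1) := by
        rw [Fin.sub_def, hval]
      have : (2*m+1 - m + d.val) % (2*m+1) = m + 1 + d.val := by
        rw [Nat.mod_eq_of_lt (by omega)]; omega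
      omega
    intro v w hadj
    rw [SimpleGraph.cycleGraph_adj'] at hadj
    rcases hadj with h | h
    · exact (key w v (Fin.ext (by rw [h, hone]))).symm
    · exact key v w (Fin.ext (by rw [h, hone]))

lemma key_low (m n : ℕ) (hm : 1 ≤ m)
    (f : Fin (2*m+1) → Finset (Fin n))
    (hcard : ∀ v, (f v).card = m)
    (hdis : ∀ v w, (SimpleGraph.cycleGraph (2*m+1)).Adj v w → Disjoint (f v) (f w)) :
    2*m+1 ≤ n := by
  by_contra h
  push_neg at h
  have hone : ((1 : Fin (2*m+1))).val = 1 := by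
    rw [Fin.val_one', Nat.mod_eq_of_lt (by omega)]
  have adj : ∀ v : Fin (2*m+1), (SimpleGraph.cycleGraph (2*m+1)).Adj v (v+1) := by
    intro v
    rw [SimpleGraph.cycleGraph_adj']
    right
    have : v + 1 - v = 1 := by ring
    rw [this, hone]
  have hn : n = 2*m := by
    have hd := hdis 0 1 (by simpa using adj 0)
    have := Finset.card_union_of_disjoint hd
    have hle : (f 0 ∪ f 1).card ≤ n := by
      calc (f 0 ∪ f 1).card ≤ Fintype.card (Fin n) := Finset.card_le_univ _
        _ = n := Fintype.card_fin n
    rw [this, hcard 0, hcard 1] at hle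
    omega
  subst hn
  have hcomp : ∀ v, f (v+1) = (f v)ᶜ := by
    intro v
    apply Finset.eq_of_subset_of_card_le
    · have hd := (hdis v (v+1) (adj v)).symm
      intro x hx
      simp only [Finset.mem_compl]
      exact fun hx' => (Finset.disjoint_left.mp hd hx) hx' 
    · rw [Finset.card_compl, hcard, hcard, Fintype.card_fin]
      omega
  have main : ∀ i : ℕ, f (i : Fin (2*m+1)) = if Even i then f 0 else (f 0)ᶜ := by
    intro i
    induction i with
    | zero => simp
    | succ i ih =>
      have : ((i+1 : ℕ) : Fin (2*m+1)) = (i : Fin (2*m+1)) + 1 := by push_cast; ring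
      rw [this, hcomp, ih]
      by_cases he : Even i
      · simp [he, Nat.even_add_one, he]
      · simp [he, Nat.even_add_one, compl_compl]
  have hlast : f ((2*m : ℕ) : Fin (2*m+1)) = f 0 := by
    rw [main]; simp
  have hadj : (SimpleGraph.cycleGraph (2*m+1)).Adj ((2*m : ℕ) : Fin (2*m+1)) 0 := by
    have h0 : ((2*m : ℕ) : Fin (2*m+1)) + 1 = 0 := by
      have : (((2*m : ℕ) : Fin (2*m+1)) + 1) = ((2*m+1 : ℕ) : Fin (2*m+1)) := by push_cast; ring
      rw [this, Fin.natCast_self]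
    have := adj ((2*m : ℕ) : Fin (2*m+1))
    rwa [h0] at this
  have := hdis _ _ hadj
  rw [hlast] at this
  have h0 : f 0 = ∅ := by
    have := disjoint_self.mp this
    simpa using this
  have := hcard 0
  rw [h0] at this
  simp at this
  omega

/-- The `(2s-1)`-set chromatic number of the cycle `C_{4s-1}` equals `4s-1`: the
minimum `n` for which each vertex of the cycle on `4s-1` vertices can be assigned a
`(2s-1)`-element subset of an `n`-element color set so that adjacent vertices receive
disjoint subsets is exactly `4s-1`. -/
theorem stmt_7 (s : ℕ) (hs : 1 ≤ s) :
    sInf {n : ℕ | ∃ f : Fin (4 * s - 1) → Finset (Fin n),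
        (∀ v, (f v).card = 2 * s - 1) ∧
        ∀ v w, (SimpleGraph.cycleGraph (4 * s - 1)).Adj v w → Disjoint (f v) (f w)} =
      4 * s - 1 := by
  have hm : 1 ≤ 2*s-1 := by omega
  rw [show 4 * s - 1 = 2*(2*s-1)+1 from by omega]
  apply le_antisymm
  · exact Nat.sInf_le (key_mem (2*s-1) hm)
  · refine le_csInf ⟨2*(2*s-1)+1, key_mem (2*s-1) hm⟩ ?_
    intro n hn
    obtain ⟨f, hcard, hdis⟩ := hn
    exact key_low (2*s-1) n hm f hcard hdis
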